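/- Let G be an infinite finitely generated residually finite group and φ an automorphism with R(φ) < ∞. Then every twisted conjugacy class {x·g·φ(x)⁻¹ : x ∈ G} is infinite. -/

import Mathlib

/-- A group is residually finite if every nontrivial element survives in some
finite quotient (equivalently, avoids some finite-index normal subgroup). -/
def IsResiduallyFinite (G : Type*) [Group G] : Prop :=
  ∀ g : G, g ≠ 1 → ∃ H : Subgroup G, H.Normal ∧ H.FiniteIndex ∧ g ∉ H

/-- The setoid of `φ`-twisted conjugacy: `g ~ h` iff `h = x * g * φ(x)⁻¹` for some `x`. -/
def twistedConjSetoid {G : Type*} [Group G] (φ : G ≃* G) : Setoid G where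
  r g h := ∃ x : G, h = x * g * (φ x)⁻¹
  iseqv := by
    refine ⟨fun g => ⟨1, by simp⟩, ?_, ?_⟩
    · rintro g h ⟨x, rfl⟩
      exact ⟨x⁻¹, by simp [mul_assoc]⟩
    · rintro a b c ⟨x, rfl⟩ ⟨y, rfl⟩
      exact ⟨y * x, by simp [map_mul, mul_assoc]⟩

section aux
variable {G : Type*} [Group G]

lemma conj_aux (a c u v p k k' : G)
    (hk : k = (c * u) * a * (p * u)⁻¹)
    (hk' : k' = (c * v) * a * (p * v)⁻¹)
    (key : p * (v * u⁻¹) * p⁻¹ = c * (v * u⁻¹) * c⁻¹) :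
    k = (c * (u * v⁻¹) * c⁻¹) * k' * (c * (u * v⁻¹) * c⁻¹)⁻¹ := by
  subst hk hk'
  have key' : p⁻¹ * (c * (v * u⁻¹) * c⁻¹) * p = v * u⁻¹ := by rw [← key]; group
  have h1 : (c * (u * v⁻¹) * c⁻¹) * ((c * v) * a * (p * v)⁻¹) * (c * (u * v⁻¹) * c⁻¹)⁻¹
      = c * u * a * (v⁻¹ * (p⁻¹ * (c * (v * u⁻¹) * c⁻¹) * p) * p⁻¹) := by group
  rw [h1, key']
  group

end aux

/-- If `G` is infinite, finitely generated, residually finite and `R(φ) < ∞`,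
then every twisted conjugacy class of `φ` is infinite. -/
theorem stmt_16 {G : Type*} [Group G] [Group.FG G] [Infinite G]
    (hrf : IsResiduallyFinite G) (φ : G ≃* G)
    (hR : Finite (Quotient (twistedConjSetoid φ))) (g : G) :
    ({y : G | ∃ x : G, y = x * g * (φ x)⁻¹} : Set G).Infinite := by
  classical
  by_contra hcontra
  rw [Set.not_infinite] at hcontra
  -- the twisted automorphism ψ x = g * φ x * g⁻¹
  set ψ : G ≃* G := φ.trans (MulAut.conj g) with hψdef
  have hψ : ∀ x, ψ x = g * φ x * g⁻¹ := fun x => rfl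
  -- the fixed subgroup of ψ
  let S : Subgroup G :=
    { carrier := {x | ψ x = x}
      one_mem' := by simp
      mul_mem' := by
        intro a b ha hb
        simp only [Set.mem_setOf_eq] at *
        rw [map_mul, ha, hb]
      inv_mem' := by
        intro a ha
        simp only [Set.mem_setOf_eq] at *
        rw [map_inv, ha] }
  have hS : ∀ x : G, x ∈ S ↔ ψ x = x := fun x => Iff.rfl
  -- S has finite index since the twisted class of g is finite
  have hGS : Finite (G ⧸ S) := by
    have hcl : Finite ↥({y : G | ∃ x : G, y = x * g * (φ x)⁻¹} : Set G) := hcontra.to_subtype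
    have wd : ∀ x y : G, @Setoid.r G (QuotientGroup.leftRel S) x y →
        (⟨x * g * (φ x)⁻¹, ⟨x, rfl⟩⟩ : ↥({y : G | ∃ x : G, y = x * g * (φ x)⁻¹} : Set G))
          = ⟨y * g * (φ y)⁻¹, ⟨y, rfl⟩⟩ := by
      intro x y hxy
      have hz0 : x⁻¹ * y ∈ S := QuotientGroup.leftRel_apply.mp hxy
      have hz : ψ (x⁻¹ * y) = x⁻¹ * y := hz0
      rw [hψ, map_mul, map_inv] at hz
      apply Subtype.ext
      show x * g * (φ x)⁻¹ = y * g * (φ y)⁻¹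
      calc x * g * (φ x)⁻¹
          = x * (g * ((φ x)⁻¹ * φ y) * g⁻¹) * g * (φ y)⁻¹ := by group
        _ = x * (x⁻¹ * y) * g * (φ y)⁻¹ := by rw [hz]
        _ = y * g * (φ y)⁻¹ := by group
    apply Finite.of_injective (fun q : G ⧸ S =>
      Quotient.liftOn' q (fun x =>
        (⟨x * g * (φ x)⁻¹, ⟨x, rfl⟩⟩ : ↥({y : G | ∃ x : G, y = x * g * (φ x)⁻¹} : Set G))) wd)
    intro q1 q2 heq
    induction q1 using Quotient.inductionOn'
    induction q2 using Quotient.inductionOn'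
    rename_i x y
    simp only [Quotient.liftOn'_mk'', Subtype.mk.injEq] at heq
    show QuotientGroup.mk x = QuotientGroup.mk y
    rw [QuotientGroup.eq]
    show ψ (x⁻¹ * y) = x⁻¹ * y
    rw [hψ, map_mul, map_inv]
    calc g * ((φ x)⁻¹ * φ y) * g⁻¹
        = x⁻¹ * (x * g * (φ x)⁻¹) * (φ y) * g⁻¹ := by group
      _ = x⁻¹ * (y * g * (φ y)⁻¹) * (φ y) * g⁻¹ := by rw [heq]
      _ = x⁻¹ * y := by group
  have hSfi : S.FiniteIndex := S.finiteIndex_of_finite_quotient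
  -- K : finite-index normal subgroup pointwise fixed by ψ
  set K : Subgroup G := S.normalCore with hKdef
  have hKnorm : K.Normal := S.normalCore_normal
  have hKfi : K.FiniteIndex := S.finiteIndex_normalCore
  have hfix : ∀ w ∈ K, ψ w = w := fun w hw => (hS w).mp (S.normalCore_le hw)
  have hGK : Finite (G ⧸ K) := inferInstance
  -- finiteness of ψ-twisted classes
  have hQψ : Finite (Quotient (twistedConjSetoid ψ)) := by
    have wd : ∀ x y : G, (twistedConjSetoid φ).r x y → (twistedConjSetoid ψ).r (x * g⁻¹) (y * g⁻¹) := by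
      rintro x y ⟨u, hy⟩
      refine ⟨u, ?_⟩
      have hψu : (ψ u)⁻¹ = g * (φ u)⁻¹ * g⁻¹ := by rw [hψ]; group
      rw [hψu, hy]; group
    have hsurj : Function.Surjective (Quotient.map' (· * g⁻¹) wd :
        Quotient (twistedConjSetoid φ) → Quotient (twistedConjSetoid ψ)) := by
      intro q
      induction q using Quotient.inductionOn'
      rename_i z
      refine ⟨Quotient.mk'' (z * g), ?_⟩
      rw [Quotient.map'_mk'']
      congr 1
      group
    exact Finite.of_surjective _ hsurj
  -- index type of (ψ-class, K-coset) pairs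
  set I := Quotient (twistedConjSetoid ψ) × (G ⧸ K) with hIdef
  set pred : I → G → Prop := fun i k => k ∈ K ∧ ∃ u, u ∈ K ∧
      k = (i.2.out * u) * i.1.out * (ψ (i.2.out * u))⁻¹ with hpreddef
  -- choose representatives
  have hselect : ∀ i : I, ∃ τ : G, (∃ k, pred i k) → pred i τ := by
    intro i
    by_cases h : ∃ k, pred i k
    · obtain ⟨k, hk⟩ := h
      exact ⟨k, fun _ => hk⟩
    · exact ⟨1, fun hh => absurd hh h⟩
  choose t ht using hselect
  -- any two elements satisfying pred i are K-conjugate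
  have conjlemma : ∀ (i : I) (k k' : G), pred i k → pred i k' → ∃ m ∈ K, k = m * k' * m⁻¹ := by
    rintro ⟨qa, qc⟩ k k' ⟨hkK, u, hu, hk⟩ ⟨hk'K, v, hv, hk'⟩
    have hvu : v * u⁻¹ ∈ K := mul_mem hv (inv_mem hu)
    have key : ψ qc.out * (v * u⁻¹) * (ψ qc.out)⁻¹ = qc.out * (v * u⁻¹) * qc.out⁻¹ := by
      have h2 := hfix (qc.out * (v * u⁻¹) * qc.out⁻¹) (hKnorm.conj_mem _ hvu qc.out)
      rw [map_mul, map_mul, map_inv, hfix (v * u⁻¹) hvu] at h2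
      exact h2
    have hk2 : k = (qc.out * u) * qa.out * (ψ qc.out * u)⁻¹ := by
      rw [hk, map_mul, hfix u hu]
    have hk'2 : k' = (qc.out * v) * qa.out * (ψ qc.out * v)⁻¹ := by
      rw [hk', map_mul, hfix v hv]
    exact ⟨qc.out * (u * v⁻¹) * qc.out⁻¹, hKnorm.conj_mem _ (mul_mem hu (inv_mem hv)) qc.out,
      conj_aux qa.out qc.out u v (ψ qc.out) k k' hk2 hk'2 key⟩
  -- every element of K satisfies pred i for some i
  have coverage : ∀ k ∈ K, ∃ i : I, pred i k := by
    intro k hk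
    set qa : Quotient (twistedConjSetoid ψ) := Quotient.mk _ k with hqa
    have hout : Quotient.mk (twistedConjSetoid ψ) qa.out = Quotient.mk _ k := by
      rw [Quotient.out_eq]
    obtain ⟨x, hx⟩ : ∃ x : G, k = x * qa.out * (ψ x)⁻¹ := Quotient.exact hout
    set qc : G ⧸ K := QuotientGroup.mk x with hqc
    have hc : (qc.out)⁻¹ * x ∈ K := by
      rw [← QuotientGroup.eq, QuotientGroup.out_eq']
    refine ⟨(qa, qc), hk, qc.out⁻¹ * x, hc, ?_⟩
    show k = (qc.out * (qc.out⁻¹ * x)) * qa.out * (ψ (qc.out * (qc.out⁻¹ * x)))⁻¹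
    have hcu : qc.out * (qc.out⁻¹ * x) = x := by group
    rw [hcu]
    exact hx
  -- choose separating finite-index normal subgroups
  have hHsel : ∀ i : I, ∃ H : Subgroup G, H.Normal ∧ H.FiniteIndex ∧ (t i ∈ H → t i = 1) := by
    intro i
    by_cases h1 : t i = 1
    · exact ⟨⊤, inferInstance, inferInstance, fun _ => h1⟩
    · obtain ⟨H, hn, hf, hm⟩ := hrf (t i) h1
      exact ⟨H, hn, hf, fun hmem => absurd hmem hm⟩
  choose H hHnorm hHfi hHmem using hHsel
  -- the intersection
  set N : Subgroup G := K ⊓ ⨅ i : I, H i with hNdef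
  have hNfi : N.FiniteIndex := by
    have h1 : (⨅ i : I, H i).FiniteIndex := Subgroup.finiteIndex_iInf hHfi
    infer_instance
  -- N is nontrivial since G is infinite and N has finite index
  have hNinf : ∃ n ∈ N, n ≠ 1 := by
    rcases N.bot_or_exists_ne_one with hbot | h
    · exfalso
      rw [hbot] at hNfi
      exact hNfi.index_ne_zero (by rw [Subgroup.index_bot]; exact Nat.card_eq_zero_of_infinite)
    · exact h
  obtain ⟨n, hnN, hn1⟩ := hNinf
  have hnK : n ∈ K := (inf_le_left : N ≤ K) hnN
  obtain ⟨i, hpredn⟩ := coverage n hnK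
  have hti : pred i (t i) := ht i ⟨n, hpredn⟩
  obtain ⟨m, hmK, hconj⟩ := conjlemma i n (t i) hpredn hti
  have hnH : n ∈ H i := by
    have h1 : N ≤ H i := le_trans inf_le_right (iInf_le _ i)
    exact h1 hnN
  have htiH : t i ∈ H i := by
    have : t i = m⁻¹ * n * m := by rw [hconj]; group
    rw [this]
    have := (hHnorm i).conj_mem n hnH m⁻¹
    simpa using this
  have : t i = 1 := hHmem i htiH
  rw [this] at hconj
  simp at hconj
  exact hn1 hconj
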